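/- Discontinuity of the blind zero-distortion rate: for the two-coin source with p ∈ (0,1), the blind zero-distortion rate R(0) equals h(pα₁ + (1−p)α₂) whenever α₁ ≠ α₂ (with α₁, α₂ ∈ (0,1)), but R(0) = 0 when α₁ = α₂; hence R(0) is a discontinuous function of α₂ at α₂ = α₁. -/

import Mathlib

open scoped BigOperators

/-- `W` is a channel (stochastic matrix) from `α` to `β`. -/
def IsChannel {α β : Type*} [Fintype β] (W : α → β → ℝ) : Prop :=
  ∀ a, (∀ b, 0 ≤ W a b) ∧ ∑ b, W a b = 1

/-- Marginal on the first coordinate. -/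
noncomputable def margX {α β : Type*} [Fintype α] [Fintype β] (p : α × β → ℝ) : α → ℝ :=
  fun a => ∑ b, p (a, b)

/-- Marginal on the second coordinate. -/
noncomputable def margY {α β : Type*} [Fintype α] [Fintype β] (p : α × β → ℝ) : β → ℝ :=
  fun b => ∑ a, p (a, b)

/-- Base-2 mutual information `I(X;Y) = D(P_XY ‖ P_X P_Y)`. -/
noncomputable def mi2 {α β : Type*} [Fintype α] [Fintype β] (p : α × β → ℝ) : ℝ :=
  ∑ z : α × β, (if p z = 0 then 0 else p z * Real.logb 2 (p z / (margX p z.1 * margY p z.2)))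

/-- Binary entropy function `h(α) = −α log₂ α − (1−α) log₂ (1−α)`. -/
noncomputable def binEnt (a : ℝ) : ℝ :=
  -(a * Real.logb 2 a) - (1 - a) * Real.logb 2 (1 - a)

/-- Prior on the two coins: `P_X(c₁) = p`, `P_X(c₂) = 1 − p`. -/
noncomputable def coinPX (p : ℝ) : Bool → ℝ := fun x => if x then p else 1 - p

/-- Coin-toss channel: coin `c₁` shows heads with probability `α₁`,
coin `c₂` with probability `α₂`. -/
noncomputable def coinPZX (α₁ α₂ : ℝ) : Bool → Bool → ℝ :=
  fun x z => if z then (if x then α₁ else α₂) else 1 - (if x then α₁ else α₂)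

/-- Blind zero-distortion rate for the two-coin source:
`R(0) = min { I(Z;Y) : P_{Y|Z} with induced P_XY = P_XZ }`. -/
noncomputable def blindRate (p α₁ α₂ : ℝ) : ℝ :=
  sInf {r : ℝ | ∃ W : Bool → Bool → ℝ, IsChannel W ∧
    (∀ x y, ∑ z, coinPX p x * coinPZX α₁ α₂ x z * W z y
        = coinPX p x * coinPZX α₁ α₂ x y) ∧
    r = mi2 (fun w : Bool × Bool =>
        (∑ x, coinPX p x * coinPZX α₁ α₂ x w.1) * W w.1 w.2)}

open Real in
lemma mi2_diag (q : ℝ) (h0 : 0 < q) (h1 : q < 1) :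
    mi2 (fun w : Bool × Bool => (if w.1 then q else 1-q) * (if w.1 = w.2 then 1 else 0)) = binEnt q := by
  have hq : q ≠ 0 := ne_of_gt h0
  have hq1 : (1:ℝ) - q ≠ 0 := by intro h; linarith [h]
  simp only [mi2, margX, margY, Fintype.sum_prod_type, Fintype.sum_bool]
  norm_num [hq, hq1]
  rw [binEnt]; ring

lemma mi2_prod {α β : Type*} [Fintype α] [Fintype β] (f : α → ℝ) (g : β → ℝ)
    (hf : ∑ a, f a = 1) (hg : ∑ b, g b = 1) :
    mi2 (fun w : α × β => f w.1 * g w.2) = 0 := by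
  unfold mi2
  apply Finset.sum_eq_zero
  intro z _
  split
  · rfl
  · rename_i h
    have hm : margX (fun w : α × β => f w.1 * g w.2) z.1 * margY (fun w : α × β => f w.1 * g w.2) z.2
        = f z.1 * g z.2 := by
      simp [margX, margY, ← Finset.mul_sum, ← Finset.sum_mul, hf, hg]
    rw [hm, div_self h, Real.logb_one, mul_zero]

lemma mi2_nonneg {α β : Type*} [Fintype α] [Fintype β] (p : α × β → ℝ)
    (hpos : ∀ z, 0 ≤ p z) (hsum : ∑ z, p z = 1) : 0 ≤ mi2 p := by
  classical
  set q : α × β → ℝ := fun z => margX p z.1 * margY p z.2 with hqdef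
  have hX : ∀ a, 0 ≤ margX p a := fun a => Finset.sum_nonneg fun b _ => hpos _
  have hY : ∀ b, 0 ≤ margY p b := fun b => Finset.sum_nonneg fun a _ => hpos _
  have hqnn : ∀ z, 0 ≤ q z := fun z => mul_nonneg (hX _) (hY _)
  have hppos : ∀ z, p z ≠ 0 → 0 < p z := fun z h => lt_of_le_of_ne (hpos z) (Ne.symm h)
  have hqpos : ∀ z, p z ≠ 0 → 0 < q z := by
    intro z h
    have h1 : p z ≤ margX p z.1 := by
      have := Finset.single_le_sum (f := fun b => p (z.1, b)) (fun b _ => hpos _)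
        (Finset.mem_univ z.2)
      simpa [margX] using this
    have h2 : p z ≤ margY p z.2 := by
      have := Finset.single_le_sum (f := fun a => p (a, z.2)) (fun a _ => hpos _)
        (Finset.mem_univ z.1)
      simpa [margY] using this
    exact mul_pos (lt_of_lt_of_le (hppos z h) h1) (lt_of_lt_of_le (hppos z h) h2)
  have hqsum : ∑ z, q z = 1 := by
    have hx : ∑ a, margX p a = 1 := by
      rw [← hsum, Fintype.sum_prod_type]; rfl
    have hy : ∑ b, margY p b = 1 := by
      rw [← hsum, Fintype.sum_prod_type_right]; rfl
    calc ∑ z : α × β, q z = ∑ a, margX p a * ∑ b, margY p b := by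
          rw [Fintype.sum_prod_type]
          refine Finset.sum_congr rfl fun a _ => ?_
          simp only [hqdef]
          exact (Finset.mul_sum _ _ _).symm
      _ = 1 := by rw [hy]; simpa using hx
  have hlog2 : (0:ℝ) < Real.log 2 := Real.log_pos one_lt_two
  have key : ∀ z : α × β, (if p z = 0 then (0:ℝ) else p z - q z) / Real.log 2 ≤
      (if p z = 0 then 0 else p z * Real.logb 2 (p z / q z)) := by
    intro z
    by_cases h : p z = 0
    · simp [h]
    · simp only [if_neg h]
      have hp := hppos z h
      have hq := hqpos z h
      rw [Real.logb, ← mul_div_assoc, div_le_div_iff_of_pos_right hlog2]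
      have hlog : Real.log (q z / p z) ≤ q z / p z - 1 :=
        Real.log_le_sub_one_of_pos (div_pos hq hp)
      have hneg : Real.log (q z / p z) = - Real.log (p z / q z) := by
        rw [← Real.log_inv]; congr 1; field_simp
      have hmul : p z * (q z / p z) = q z := by field_simp
      nlinarith [mul_le_mul_of_nonneg_left hlog hp.le]
  have step : ∑ z : α × β, (if p z = 0 then (0:ℝ) else p z - q z) / Real.log 2 ≤ mi2 p :=
    Finset.sum_le_sum fun z _ => key z
  refine le_trans ?_ step
  rw [← Finset.sum_div]
  apply div_nonneg _ hlog2.le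
  have e1 : ∑ z : α × β, (if p z = 0 then (0:ℝ) else p z - q z)
      = (∑ z : α × β, p z) - ∑ z : α × β, (if p z = 0 then (0:ℝ) else q z) := by
    rw [← Finset.sum_sub_distrib]
    refine Finset.sum_congr rfl fun z _ => ?_
    by_cases h : p z = 0 <;> simp [h]
  have e2 : ∑ z : α × β, (if p z = 0 then (0:ℝ) else q z) ≤ 1 := by
    rw [← hqsum]
    exact Finset.sum_le_sum fun z _ => by by_cases h : p z = 0 <;> simp [h, hqnn z]
  rw [e1, hsum]
  linarith

lemma margZ_eq (p α₁ α₂ : ℝ) (z : Bool) :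
    (∑ x, coinPX p x * coinPZX α₁ α₂ x z)
      = if z then p * α₁ + (1 - p) * α₂ else 1 - (p * α₁ + (1 - p) * α₂) := by
  cases z <;> simp [coinPX, coinPZX, Fintype.sum_bool] <;> ring

lemma blindRate_ne (p α₁ α₂ : ℝ) (hp0 : 0 < p) (hp1 : p < 1)
    (ha1 : 0 < α₁) (hb1 : α₁ < 1) (ha2 : 0 < α₂) (hb2 : α₂ < 1) (h2 : α₂ ≠ α₁) :
    blindRate p α₁ α₂ = binEnt (p * α₁ + (1 - p) * α₂) := by
  set q := p * α₁ + (1 - p) * α₂ with hq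
  have hq0 : 0 < q := by nlinarith
  have hq1 : q < 1 := by nlinarith
  have hSet : {r : ℝ | ∃ W : Bool → Bool → ℝ, IsChannel W ∧
      (∀ x y, ∑ z, coinPX p x * coinPZX α₁ α₂ x z * W z y
          = coinPX p x * coinPZX α₁ α₂ x y) ∧
      r = mi2 (fun w : Bool × Bool =>
          (∑ x, coinPX p x * coinPZX α₁ α₂ x w.1) * W w.1 w.2)} = {binEnt q} := by
    ext r
    simp only [Set.mem_setOf_eq, Set.mem_singleton_iff]
    constructor
    · rintro ⟨W, hW, hcons, rfl⟩
      have e1 : α₁ * W true true + (1 - α₁) * W false true = α₁ := by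
        have h := hcons true true
        rw [Fintype.sum_bool] at h
        simp only [coinPX, coinPZX] at h
        norm_num at h
        apply mul_left_cancel₀ (ne_of_gt hp0)
        linear_combination h
      have e2 : α₂ * W true true + (1 - α₂) * W false true = α₂ := by
        have h := hcons false true
        rw [Fintype.sum_bool] at h
        simp only [coinPX, coinPZX] at h
        norm_num at h
        apply mul_left_cancel₀ (ne_of_gt (by linarith : (0:ℝ) < 1 - p))
        linear_combination h
      have hab : W true true - W false true = 1 := by
        apply mul_left_cancel₀ (sub_ne_zero.mpr (Ne.symm h2))
        linear_combination e1 - e2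
      have hsum_t := (hW true).2
      have hsum_f := (hW false).2
      rw [Fintype.sum_bool] at hsum_t hsum_f
      have h1 := (hW true).1 false
      have h2' := (hW false).1 true
      have hTT : W true true = 1 := by linarith
      have hFT : W false true = 0 := by linarith
      have hTF : W true false = 0 := by linarith
      have hFF : W false false = 1 := by linarith
      have hjoint : (fun w : Bool × Bool =>
            (∑ x, coinPX p x * coinPZX α₁ α₂ x w.1) * W w.1 w.2)
          = fun w : Bool × Bool => (if w.1 then q else 1 - q) * (if w.1 = w.2 then 1 else 0) := by
        funext w
        obtain ⟨z, y⟩ := w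
        rw [margZ_eq, ← hq]
        cases z <;> cases y <;> simp [hTT, hFT, hTF, hFF]
      rw [hjoint]
      exact mi2_diag q hq0 hq1
    · rintro rfl
      refine ⟨fun z y => if z = y then 1 else 0, ?_, ?_, ?_⟩
      · intro a
        refine ⟨fun b => by dsimp only; split <;> norm_num, ?_⟩
        cases a <;> simp [Fintype.sum_bool]
      · intro x y
        cases x <;> cases y <;> simp [coinPX, coinPZX, Fintype.sum_bool]
      · have hjoint : (fun w : Bool × Bool =>
              (∑ x, coinPX p x * coinPZX α₁ α₂ x w.1) *
                (if w.1 = w.2 then (1:ℝ) else 0))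
            = fun w : Bool × Bool => (if w.1 then q else 1 - q) * (if w.1 = w.2 then 1 else 0) := by
          funext w
          obtain ⟨z, y⟩ := w
          rw [margZ_eq, ← hq]
        rw [hjoint]
        exact (mi2_diag q hq0 hq1).symm
  rw [blindRate, hSet, csInf_singleton]


lemma blindRate_self (p α₁ : ℝ) (ha1 : 0 < α₁) (hb1 : α₁ < 1) :
    blindRate p α₁ α₁ = 0 := by
  have hmargZ : ∀ z : Bool, (∑ x, coinPX p x * coinPZX α₁ α₁ x z)
      = if z then α₁ else 1 - α₁ := by
    intro z
    rw [margZ_eq]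
    cases z <;> simp <;> ring
  set S := {r : ℝ | ∃ W : Bool → Bool → ℝ, IsChannel W ∧
    (∀ x y, ∑ z, coinPX p x * coinPZX α₁ α₁ x z * W z y
        = coinPX p x * coinPZX α₁ α₁ x y) ∧
    r = mi2 (fun w : Bool × Bool =>
        (∑ x, coinPX p x * coinPZX α₁ α₁ x w.1) * W w.1 w.2)} with hS
  have hmem : (0:ℝ) ∈ S := by
    refine ⟨fun _ y => if y then α₁ else 1 - α₁, ?_, ?_, ?_⟩
    · intro a
      refine ⟨fun b => by dsimp only; split <;> linarith, ?_⟩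
      rw [Fintype.sum_bool]; norm_num
    · intro x y
      cases x <;> cases y <;> simp [coinPX, coinPZX, Fintype.sum_bool] <;> ring
    · have hjoint : (fun w : Bool × Bool =>
            (∑ x, coinPX p x * coinPZX α₁ α₁ x w.1) *
              (if w.2 then α₁ else 1 - α₁))
          = fun w : Bool × Bool => (if w.1 then α₁ else 1 - α₁) * (if w.2 then α₁ else 1 - α₁) := by
        funext w
        rw [hmargZ]
      rw [hjoint]
      exact (mi2_prod (fun z : Bool => if z then α₁ else 1 - α₁)
        (fun z : Bool => if z then α₁ else 1 - α₁)
        (by rw [Fintype.sum_bool]; norm_num) (by rw [Fintype.sum_bool]; norm_num)).symm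
  have hlb : ∀ r ∈ S, (0:ℝ) ≤ r := by
    rintro r ⟨W, hW, hcons, rfl⟩
    apply mi2_nonneg
    · intro z
      apply mul_nonneg _ ((hW z.1).1 z.2)
      rw [hmargZ]
      split <;> linarith
    · rw [Fintype.sum_prod_type]
      have : ∀ z : Bool, (∑ y, (∑ x, coinPX p x * coinPZX α₁ α₁ x z) * W z y)
          = (if z then α₁ else 1 - α₁) := by
        intro z
        rw [← Finset.mul_sum, (hW z).2, mul_one, hmargZ]
      rw [Finset.sum_congr rfl fun z _ => this z, Fintype.sum_bool]
      norm_num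
  exact le_antisymm (csInf_le ⟨0, hlb⟩ hmem) (le_csInf ⟨0, hmem⟩ hlb)



open Real Filter Topology in
theorem blind_rate_discontinuous (p α₁ : ℝ)
    (hp : 0 < p ∧ p < 1) (h1 : 0 < α₁ ∧ α₁ < 1) :
    (∀ α₂, 0 < α₂ → α₂ < 1 → α₂ ≠ α₁ →
        blindRate p α₁ α₂ = binEnt (p * α₁ + (1 - p) * α₂)) ∧
      blindRate p α₁ α₁ = 0 ∧
      ¬ ContinuousAt (fun α₂ => blindRate p α₁ α₂) α₁ := by
  obtain ⟨hp0, hp1⟩ := hp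
  obtain ⟨ha1, hb1⟩ := h1
  have part1 : ∀ α₂, 0 < α₂ → α₂ < 1 → α₂ ≠ α₁ →
      blindRate p α₁ α₂ = binEnt (p * α₁ + (1 - p) * α₂) :=
    fun α₂ ha2 hb2 h2 => blindRate_ne p α₁ α₂ hp0 hp1 ha1 hb1 ha2 hb2 h2
  have part2 : blindRate p α₁ α₁ = 0 := blindRate_self p α₁ ha1 hb1
  refine ⟨part1, part2, ?_⟩
  intro hcont
  have hb0 : 0 < binEnt α₁ := by
    have l1 : Real.logb 2 α₁ < 0 := Real.logb_neg one_lt_two ha1 hb1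
    have l2 : Real.logb 2 (1 - α₁) < 0 :=
      Real.logb_neg one_lt_two (by linarith) (by linarith)
    unfold binEnt
    nlinarith
  set s := Set.Ioo (0:ℝ) α₁ with hs
  have hne : (𝓝[s] α₁).NeBot := by
    rw [← mem_closure_iff_nhdsWithin_neBot, hs, closure_Ioo (ne_of_lt ha1)]
    exact ⟨le_of_lt ha1, le_refl _⟩
  have t1 : Tendsto (fun α₂ => blindRate p α₁ α₂) (𝓝[s] α₁) (𝓝 0) := by
    have h := hcont.tendsto
    rw [part2] at h
    exact h.mono_left nhdsWithin_le_nhds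
  have t2 : Tendsto (fun α₂ => blindRate p α₁ α₂) (𝓝[s] α₁) (𝓝 (binEnt α₁)) := by
    have hbe : ContinuousAt binEnt α₁ := by
      unfold binEnt
      have c1 : ContinuousAt (fun a : ℝ => Real.logb 2 a) α₁ :=
        Real.continuousAt_logb (ne_of_gt ha1)
      have c2 : ContinuousAt (fun a : ℝ => Real.logb 2 (1 - a)) α₁ :=
        ContinuousAt.comp (Real.continuousAt_logb (by intro h; linarith [h] : (1:ℝ) - α₁ ≠ 0))
          (continuousAt_const.sub continuousAt_id)
      exact ((continuousAt_id.mul c1).neg).sub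
        ((continuousAt_const.sub continuousAt_id).mul c2)
    have hinner : Tendsto (fun t : ℝ => p * α₁ + (1 - p) * t) (𝓝[s] α₁) (𝓝 α₁) := by
      have hc : Continuous (fun t : ℝ => p * α₁ + (1 - p) * t) := by fun_prop
      have := (hc.tendsto α₁).mono_left (nhdsWithin_le_nhds (s := s))
      rwa [show p * α₁ + (1 - p) * α₁ = α₁ by ring] at this
    have hg : Tendsto (fun t : ℝ => binEnt (p * α₁ + (1 - p) * t)) (𝓝[s] α₁)
        (𝓝 (binEnt α₁)) := by
      have := hbe.tendsto.comp hinner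
      simpa [Function.comp_def] using this
    apply hg.congr'
    filter_upwards [self_mem_nhdsWithin] with t ht
    exact (part1 t ht.1 (lt_trans ht.2 hb1) (ne_of_lt ht.2)).symm
  exact (ne_of_gt hb0) (tendsto_nhds_unique t1 t2).symm
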